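/- arXiv:1708.08415 — 4 statements merged into one kernel-verified Lean document; each statement's English description precedes it below -/
import Mathlib

section
/- Let 0 < R0 < R1 with R1 > e^{1/4} R0. Then there exists an admissible transition function χ for (R0, R1), i.e. a three times continuously differentiable function χ on [0, ∞) with χ(r) = 0 for 0 ≤ r ≤ R0, χ(r) = 1 for r ≥ R1, 0 < χ(r) < 1 for R0 < r < R1, and 0 ≤ r·χ′(r) < 4 for all r > 0. -/
open Real Set MeasureTheory intervalIntegral


/-- `χ : ℝ → ℝ` is an *admissible transition function* for `(R0, R1)`:
`χ` is three times continuously differentiable on `[0, ∞)` and satisfies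
(i) `χ(r) = 0` for `0 ≤ r ≤ R0`, `χ(r) = 1` for `r ≥ R1`, `0 < χ(r) < 1` for `R0 < r < R1`;
(ii) `0 ≤ r·χ′(r) < 4` for all `r > 0`. -/
structure IsAdmissibleTransition (R0 R1 : ℝ) (χ : ℝ → ℝ) : Prop where
  contDiffOn : ContDiffOn ℝ 3 χ (Set.Ici 0)
  eq_zero : ∀ r, 0 ≤ r → r ≤ R0 → χ r = 0
  eq_one : ∀ r, R1 ≤ r → χ r = 1
  mem_Ioo : ∀ r, R0 < r → r < R1 → χ r ∈ Set.Ioo (0 : ℝ) 1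
  deriv_nonneg : ∀ r : ℝ, 0 < r → 0 ≤ r * deriv χ r
  deriv_lt_four : ∀ r : ℝ, 0 < r → r * deriv χ r < 4

/-- If `0 < R0 < R1` with `R1 > e^{1/4} R0`, then there exists an admissible transition
function for `(R0, R1)`. -/
theorem exists_admissible_transition (R0 R1 : ℝ) (hR0 : 0 < R0) (hR01 : R0 < R1)
    (h : R1 > Real.exp (1 / 4) * R0) :
    ∃ χ : ℝ → ℝ, IsAdmissibleTransition R0 R1 χ := by
  have hR1 : 0 < R1 := hR0.trans hR01
  set L : ℝ := Real.log (R1 / R0) with hLdef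
  have hL : 1/4 < L := by
    have h1 : Real.exp (1/4) < R1 / R0 := (lt_div_iff₀ hR0).2 (by linarith)
    calc (1:ℝ)/4 = Real.log (Real.exp (1/4)) := (Real.log_exp _).symm
    _ < L := Real.log_lt_log (Real.exp_pos _) h1
  set a : ℝ := (L - 1/4)/4 with hadef
  have ha : 0 < a := by simp only [hadef]; linarith
  have haL : a ≤ L - a := by simp only [hadef]; linarith
  set s : ℝ → ℝ := fun t => Real.smoothTransition (t/a) * Real.smoothTransition ((L-t)/a)
    with hsdef
  have hs_cd : ContDiff ℝ 3 s := by
    apply ContDiff.mul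
    · exact Real.smoothTransition.contDiff.comp (contDiff_id.div_const a)
    · exact Real.smoothTransition.contDiff.comp ((contDiff_const.sub contDiff_id).div_const a)
  have hs_cont : Continuous s := hs_cd.continuous
  have hs_int : ∀ u v : ℝ, IntervalIntegrable s volume u v :=
    fun u v => hs_cont.intervalIntegrable u v
  have hs_nonneg : ∀ t, 0 ≤ s t := fun t =>
    mul_nonneg (Real.smoothTransition.nonneg _) (Real.smoothTransition.nonneg _)
  have hs_le_one : ∀ t, s t ≤ 1 := fun t =>
    mul_le_one₀ (Real.smoothTransition.le_one _) (Real.smoothTransition.nonneg _)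
      (Real.smoothTransition.le_one _)
  have hs_zero_left : ∀ t ≤ 0, s t = 0 := fun t ht => by
    simp only [hsdef]
    rw [Real.smoothTransition.zero_of_nonpos
      (show t / a ≤ 0 from div_nonpos_of_nonpos_of_nonneg ht ha.le), zero_mul]
  have hs_zero_right : ∀ t, L ≤ t → s t = 0 := fun t ht => by
    simp only [hsdef]
    rw [Real.smoothTransition.zero_of_nonpos
      (show (L - t) / a ≤ 0 from div_nonpos_of_nonpos_of_nonneg (by linarith) ha.le), mul_zero]
  have hs_one : ∀ t, a ≤ t → t ≤ L - a → s t = 1 := fun t h1 h2 => by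
    simp only [hsdef]
    rw [Real.smoothTransition.one_of_one_le ((le_div_iff₀ ha).2 (by linarith)),
      Real.smoothTransition.one_of_one_le ((le_div_iff₀ ha).2 (by linarith)), mul_one]
  have hs_pos : ∀ t, 0 < t → t < L → 0 < s t := fun t h1 h2 =>
    mul_pos (Real.smoothTransition.pos_of_pos (div_pos h1 ha))
      (Real.smoothTransition.pos_of_pos (div_pos (by linarith) ha))
  set F : ℝ → ℝ := fun x => ∫ t in (0:ℝ)..x, s t with hFdef
  have hF_deriv : ∀ x, HasDerivAt F (s x) x := fun x =>
    intervalIntegral.integral_hasDerivAt_right (hs_int 0 x)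
      (hs_cont.stronglyMeasurable.stronglyMeasurableAtFilter) hs_cont.continuousAt
  have hF_diff : Differentiable ℝ F := fun x => (hF_deriv x).differentiableAt
  have hderivF : deriv F = s := funext fun x => (hF_deriv x).deriv
  have hF3 : ContDiff ℝ 3 F := by
    rw [show (3 : WithTop ℕ∞) = 2 + 1 by norm_num, contDiff_succ_iff_deriv]
    refine ⟨hF_diff, by simp, ?_⟩
    rw [hderivF]; exact hs_cd.of_le (by norm_num)
  set I : ℝ := F L with hIdef
  have hI : 1/4 < I := by
    have e1 : (∫ t in (0:ℝ)..a, s t) + (∫ t in a..(L-a), s t) = ∫ t in (0:ℝ)..(L-a), s t :=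
      integral_add_adjacent_intervals (hs_int 0 a) (hs_int a (L-a))
    have e2 : (∫ t in (0:ℝ)..(L-a), s t) + (∫ t in (L-a)..L, s t) = ∫ t in (0:ℝ)..L, s t :=
      integral_add_adjacent_intervals (hs_int 0 (L-a)) (hs_int (L-a) L)
    have m : (∫ t in a..(L-a), s t) = L - 2*a := by
      rw [intervalIntegral.integral_congr (g := fun _ => (1:ℝ))
        (fun t ht => by
          rw [Set.uIcc_of_le haL] at ht
          exact hs_one t ht.1 ht.2)]
      simp; ring
    have n1 : 0 ≤ ∫ t in (0:ℝ)..a, s t :=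
      intervalIntegral.integral_nonneg ha.le (fun u _ => hs_nonneg u)
    have n2 : 0 ≤ ∫ t in (L-a)..L, s t :=
      intervalIntegral.integral_nonneg (by linarith) (fun u _ => hs_nonneg u)
    have goal : (1:ℝ)/4 < ∫ t in (0:ℝ)..L, s t := by
      rw [← e2, ← e1, m]
      have : L - 2*a = L/2 + 1/8 := by simp only [hadef]; ring
      rw [this]; linarith
    exact goal
  have hIpos : 0 < I := lt_trans (by norm_num) hI
  -- facts about F
  have hF0 : ∀ t, t ≤ 0 → F t = 0 := fun t ht => by
    simp only [hFdef]
    rw [intervalIntegral.integral_congr (g := fun _ => (0:ℝ))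
      (fun u hu => by
        rcases Set.mem_uIcc.1 hu with h' | h'
        · exact hs_zero_left u (h'.2.trans ht)
        · exact hs_zero_left u h'.2)]
    simp
  have hFL : ∀ t, L ≤ t → F t = I := fun t ht => by
    have e : I + (∫ u in L..t, s u) = F t :=
      integral_add_adjacent_intervals (hs_int 0 L) (hs_int L t)
    have z : (∫ u in L..t, s u) = 0 := by
      rw [intervalIntegral.integral_congr (g := fun _ => (0:ℝ))
        (fun u hu => by
          rw [Set.uIcc_of_le ht] at hu
          exact hs_zero_right u hu.1)]
      simp
    rw [← e, z, add_zero]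
  have hL0 : (0:ℝ) < L := by linarith
  have hFpos : ∀ t, 0 < t → t < L → 0 < F t := fun t h1 h2 =>
    intervalIntegral.intervalIntegral_pos_of_pos_on (hs_int 0 t)
      (fun u hu => hs_pos u hu.1 (hu.2.trans h2)) h1
  have hFlt : ∀ t, 0 < t → t < L → F t < I := fun t h1 h2 => by
    have e : F t + (∫ u in t..L, s u) = I :=
      integral_add_adjacent_intervals (hs_int 0 t) (hs_int t L)
    have p : 0 < ∫ u in t..L, s u :=
      intervalIntegral.intervalIntegral_pos_of_pos_on (hs_int t L)
        (fun u hu => hs_pos u (h1.trans hu.1) hu.2) h2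
    linarith
  -- the function
  refine ⟨fun r => F (Real.log (r / R0)) / I, ?_, ?_, ?_, ?_, ?_, ?_⟩
  · -- ContDiffOn
    intro x hx
    rcases lt_or_ge x R0 with hxlt | hxge
    · refine (contDiffWithinAt_const (c := (0:ℝ))).congr_of_eventuallyEq ?_ ?_
      · filter_upwards [nhdsWithin_le_nhds (Iio_mem_nhds hxlt), self_mem_nhdsWithin]
          with y hy1 hy2
        have : Real.log (y / R0) ≤ 0 :=
          Real.log_nonpos (div_nonneg hy2 hR0.le) ((div_le_one hR0).2 hy1.le)
        rw [hF0 _ this, zero_div]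
      · have : Real.log (x / R0) ≤ 0 :=
          Real.log_nonpos (div_nonneg hx hR0.le) ((div_le_one hR0).2 hxlt.le)
        rw [hF0 _ this, zero_div]
    · have hxpos : 0 < x := lt_of_lt_of_le hR0 hxge
      have hlogx : ContDiffAt ℝ 3 (fun r : ℝ => Real.log (r / R0)) x :=
        (Real.contDiffAt_log.2 (by positivity)).comp x (contDiffAt_id.div_const R0)
      exact ((hF3.contDiffAt.comp x hlogx).div_const I).contDiffWithinAt
  · -- eq_zero
    intro r hr0 hr1
    have : Real.log (r / R0) ≤ 0 := Real.log_nonpos (by positivity) ((div_le_one hR0).2 hr1)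
    rw [hF0 _ this, zero_div]
  · -- eq_one
    intro r hr
    have hL' : L ≤ Real.log (r / R0) :=
      Real.log_le_log (by positivity) ((div_le_div_iff_of_pos_right hR0).2 hr)
    rw [hFL _ hL', div_self hIpos.ne']
  · -- mem_Ioo
    intro r hr1 hr2
    have h1 : 0 < Real.log (r / R0) := Real.log_pos ((one_lt_div hR0).2 hr1)
    have h2 : Real.log (r / R0) < L :=
      Real.log_lt_log (div_pos (hR0.trans hr1) hR0) ((div_lt_div_iff_of_pos_right hR0).2 hr2)
    exact ⟨div_pos (hFpos _ h1 h2) hIpos, (div_lt_one hIpos).2 (hFlt _ h1 h2)⟩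
  · -- deriv_nonneg
    intro r hr
    have hlog : HasDerivAt (fun r : ℝ => Real.log (r / R0)) (1/r) r := by
      have h1 : HasDerivAt (fun r : ℝ => r / R0) (1/R0) r := (hasDerivAt_id r).div_const R0
      have h2 := (Real.hasDerivAt_log (by positivity : r / R0 ≠ 0)).comp r h1
      rw [show (1/r) = (r / R0)⁻¹ * (1 / R0) by field_simp]
      exact h2
      try ring
    have hd : HasDerivAt (fun r : ℝ => F (Real.log (r / R0)) / I)
        (s (Real.log (r / R0)) * (1/r) / I) r :=
      (((hF_deriv _).comp r hlog)).div_const I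
    rw [hd.deriv]
    have := hs_nonneg (Real.log (r / R0))
    positivity
  · -- deriv_lt_four
    intro r hr
    have hlog : HasDerivAt (fun r : ℝ => Real.log (r / R0)) (1/r) r := by
      have h1 : HasDerivAt (fun r : ℝ => r / R0) (1/R0) r := (hasDerivAt_id r).div_const R0
      have h2 := (Real.hasDerivAt_log (by positivity : r / R0 ≠ 0)).comp r h1
      rw [show (1/r) = (r / R0)⁻¹ * (1 / R0) by field_simp]
      exact h2
      try ring
    have hd : HasDerivAt (fun r : ℝ => F (Real.log (r / R0)) / I)
        (s (Real.log (r / R0)) * (1/r) / I) r :=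
      (((hF_deriv _).comp r hlog)).div_const I
    rw [hd.deriv]
    have hsle := hs_le_one (Real.log (r / R0))
    have heq : r * (s (Real.log (r / R0)) * (1/r) / I) = s (Real.log (r / R0)) / I := by
      field_simp
      try ring
    rw [heq]
    calc s (Real.log (r / R0)) / I ≤ 1 / I := by gcongr
    _ < 4 := by rw [div_lt_iff₀ hIpos]; linarith
end

section
/- Morawetz–Ludwig identity: let d ≥ 2 be an integer, D ⊆ ℝ^d \ {0} open, k ∈ ℝ and α ∈ ℝ, and let v : D → ℂ be twice continuously differentiable. For x ∈ D set r := |x|, v_r := x·∇v/r, Lv := Δv + k²v and M_α v := r( v_r − i k v + (α/r) v ) = x·∇v − i k r v + α v. Then at every point of D, 2 Re( conj(M_α v) Lv ) = div[ 2 Re( conj(M_α v) ∇v ) + (k²|v|² − |∇v|²) x ] + (2α − (d−1))(k²|v|² − |∇v|²) − (|∇v|² − |v_r|²) − |v_r − i k v|². -/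
open scoped BigOperators ComplexConjugate

noncomputable section

/-- Partial derivative of a complex-valued function in the `i`-th coordinate direction. -/
def cpd (d : ℕ) (f : EuclideanSpace ℝ (Fin d) → ℂ) (i : Fin d)
    (x : EuclideanSpace ℝ (Fin d)) : ℂ :=
  fderiv ℝ f x (EuclideanSpace.single i 1)

/-- Divergence of a vector field on `ℝ^d`. -/
def vdiv (d : ℕ) (Z : EuclideanSpace ℝ (Fin d) → EuclideanSpace ℝ (Fin d))
    (x : EuclideanSpace ℝ (Fin d)) : ℝ :=
  ∑ i, fderiv ℝ Z x (EuclideanSpace.single i 1) i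

/-- Laplacian (sum of second partial derivatives) of a complex-valued function. -/
def clap (d : ℕ) (f : EuclideanSpace ℝ (Fin d) → ℂ) (x : EuclideanSpace ℝ (Fin d)) : ℂ :=
  ∑ i, cpd d (cpd d f i) i x

/-- `|∇f|² = Σ_j |∂_j f|²`. -/
def gradsq (d : ℕ) (f : EuclideanSpace ℝ (Fin d) → ℂ) (x : EuclideanSpace ℝ (Fin d)) : ℝ :=
  ∑ i, ‖cpd d f i x‖ ^ 2

/-- Radial derivative `v_r = x·∇v/r`, `r = |x|`. -/
def rder (d : ℕ) (f : EuclideanSpace ℝ (Fin d) → ℂ) (x : EuclideanSpace ℝ (Fin d)) : ℂ :=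
  (∑ i, ((x i : ℝ) : ℂ) * cpd d f i x) / ((‖x‖ : ℝ) : ℂ)

section Toolkit

variable {d : ℕ} {x : EuclideanSpace ℝ (Fin d)} {i : Fin d}
  {f g : EuclideanSpace ℝ (Fin d) → ℂ}

lemma cpd_add (hf : DifferentiableAt ℝ f x) (hg : DifferentiableAt ℝ g x) :
    cpd d (fun y => f y + g y) i x = cpd d f i x + cpd d g i x := by
  simp [cpd, fderiv_fun_add hf hg]

lemma cpd_sub (hf : DifferentiableAt ℝ f x) (hg : DifferentiableAt ℝ g x) :
    cpd d (fun y => f y - g y) i x = cpd d f i x - cpd d g i x := by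
  simp [cpd, fderiv_fun_sub hf hg]

lemma cpd_mul (hf : DifferentiableAt ℝ f x) (hg : DifferentiableAt ℝ g x) :
    cpd d (fun y => f y * g y) i x = f x * cpd d g i x + g x * cpd d f i x := by
  simp [cpd, fderiv_fun_mul hf hg, smul_eq_mul]

lemma cpd_const_mul (hf : DifferentiableAt ℝ f x) (c : ℂ) :
    cpd d (fun y => c * f y) i x = c * cpd d f i x := by
  simp [cpd, fderiv_const_mul hf c]

lemma cpd_sum {ι : Type*} {s : Finset ι} {F : ι → EuclideanSpace ℝ (Fin d) → ℂ}
    (hF : ∀ j ∈ s, DifferentiableAt ℝ (F j) x) :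
    cpd d (fun y => ∑ j ∈ s, F j y) i x = ∑ j ∈ s, cpd d (F j) i x := by
  simp [cpd, fderiv_fun_sum hF]

lemma cpd_conj (hf : DifferentiableAt ℝ f x) :
    cpd d (fun y => conj (f y)) i x = conj (cpd d f i x) := by
  have h := Complex.conjCLE.toContinuousLinearMap.hasFDerivAt.comp x hf.hasFDerivAt
  have h2 : (⇑Complex.conjCLE.toContinuousLinearMap ∘ f) = fun y => conj (f y) := by
    funext y; simp
  rw [h2] at h
  rw [cpd, h.fderiv]; simp [cpd]

lemma diffAt_conj (hf : DifferentiableAt ℝ f x) :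
    DifferentiableAt ℝ (fun y => conj (f y)) x := by
  have h := Complex.conjCLE.toContinuousLinearMap.differentiableAt.comp x hf
  have h2 : (⇑Complex.conjCLE.toContinuousLinearMap ∘ f) = fun y => conj (f y) := by
    funext y; simp
  rwa [h2] at h

lemma cpd_ofReal {u : EuclideanSpace ℝ (Fin d) → ℝ} (hu : DifferentiableAt ℝ u x) :
    cpd d (fun y => ((u y : ℝ) : ℂ)) i x
      = ((fderiv ℝ u x (EuclideanSpace.single i 1) : ℝ) : ℂ) := by
  have h := Complex.ofRealCLM.hasFDerivAt.comp x hu.hasFDerivAt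
  have h2 : (⇑Complex.ofRealCLM ∘ u) = fun y => ((u y : ℝ) : ℂ) := by
    funext y; simp
  rw [h2] at h
  rw [cpd, h.fderiv]; simp

lemma diffAt_ofReal {u : EuclideanSpace ℝ (Fin d) → ℝ} (hu : DifferentiableAt ℝ u x) :
    DifferentiableAt ℝ (fun y => ((u y : ℝ) : ℂ)) x := by
  have h := Complex.ofRealCLM.differentiableAt.comp x hu
  have h2 : (⇑Complex.ofRealCLM ∘ u) = fun y => ((u y : ℝ) : ℂ) := by
    funext y; simp
  rwa [h2] at h

lemma hasFDerivAt_proj (j : Fin d) :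
    HasFDerivAt (fun y : EuclideanSpace ℝ (Fin d) => y j)
      (EuclideanSpace.proj j : EuclideanSpace ℝ (Fin d) →L[ℝ] ℝ) x :=
  (EuclideanSpace.proj j : EuclideanSpace ℝ (Fin d) →L[ℝ] ℝ).hasFDerivAt

lemma fderiv_proj (j : Fin d) :
    fderiv ℝ (fun y : EuclideanSpace ℝ (Fin d) => y j) x (EuclideanSpace.single i 1)
      = if j = i then 1 else 0 := by
  rw [(hasFDerivAt_proj j).fderiv]
  simp [EuclideanSpace.single_apply]

lemma hasFDerivAt_norm_euc (hx : x ≠ 0) :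
    HasFDerivAt (fun y : EuclideanSpace ℝ (Fin d) => ‖y‖) (‖x‖⁻¹ • innerSL ℝ x) x := by
  have h0 : (0:ℝ) < ‖x‖ := norm_pos_iff.2 hx
  have h1 : HasFDerivAt (fun y : EuclideanSpace ℝ (Fin d) => ‖y‖ ^ 2)
      (2 • innerSL ℝ x) x := (hasStrictFDerivAt_norm_sq x).hasFDerivAt
  have h2 := h1.sqrt (by positivity)
  have h3 : (fun y : EuclideanSpace ℝ (Fin d) => Real.sqrt (‖y‖ ^ 2))
      = fun y : EuclideanSpace ℝ (Fin d) => ‖y‖ := by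
    funext y; exact Real.sqrt_sq (norm_nonneg y)
  rw [h3] at h2
  convert h2 using 1
  · ext; rfl
  ext y
  rw [Real.sqrt_sq h0.le]
  simp only [ContinuousLinearMap.smul_apply, ContinuousLinearMap.coe_smul', Pi.smul_apply,
    smul_eq_mul]
  ring

lemma fderiv_norm_single (hx : x ≠ 0) (i : Fin d) :
    fderiv ℝ (fun y : EuclideanSpace ℝ (Fin d) => ‖y‖) x (EuclideanSpace.single i 1)
      = x i / ‖x‖ := by
  rw [(hasFDerivAt_norm_euc hx).fderiv]
  simp only [ContinuousLinearMap.smul_apply, innerSL_apply_apply, smul_eq_mul]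
  rw [EuclideanSpace.inner_single_right]
  simp [div_eq_inv_mul]

/-- `cpd` of the complexified `j`-th coordinate. -/
lemma cpd_coord (j : Fin d) :
    cpd d (fun y => ((y j : ℝ) : ℂ)) i x = if j = i then 1 else 0 := by
  rw [cpd_ofReal (hasFDerivAt_proj j).differentiableAt, fderiv_proj]
  split <;> simp

/-- `cpd` of the complexified norm. -/
lemma cpd_norm (hx : x ≠ 0) :
    cpd d (fun y => ((‖y‖ : ℝ) : ℂ)) i x = ((x i / ‖x‖ : ℝ) : ℂ) := by
  rw [cpd_ofReal (hasFDerivAt_norm_euc hx).differentiableAt, fderiv_norm_single hx]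

end Toolkit

/-- **Morawetz–Ludwig identity.**  Let `d ≥ 2`, `D ⊆ ℝ^d \ {0}` open, `k, α ∈ ℝ`, and let
`v : D → ℂ` be twice continuously differentiable.  With `r = |x|`, `v_r = x·∇v/r`,
`Lv = Δv + k²v` and `M_α v = x·∇v − i k r v + α v`, at every point of `D`:
`2 Re(conj(M_α v) Lv) = div[2 Re(conj(M_α v) ∇v) + (k²|v|² − |∇v|²)x]`
`+ (2α − (d−1))(k²|v|² − |∇v|²) − (|∇v|² − |v_r|²) − |v_r − i k v|²`. -/
theorem morawetz_ludwig_identity (d : ℕ) (hd : 2 ≤ d)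
    (D : Set (EuclideanSpace ℝ (Fin d))) (hD : IsOpen D)
    (hD0 : D ⊆ {x : EuclideanSpace ℝ (Fin d) | x ≠ 0}) (k α : ℝ)
    (v : EuclideanSpace ℝ (Fin d) → ℂ) (hv : ContDiffOn ℝ 2 v D)
    (x : EuclideanSpace ℝ (Fin d)) (hx : x ∈ D) :
    (fun (Lv Mv : EuclideanSpace ℝ (Fin d) → ℂ)
         (G : EuclideanSpace ℝ (Fin d) → EuclideanSpace ℝ (Fin d)) =>
      2 * (conj (Mv x) * Lv x).re
        = vdiv d G x
          + (2 * α - ((d : ℝ) - 1)) * (k ^ 2 * ‖v x‖ ^ 2 - gradsq d v x)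
          - (gradsq d v x - ‖rder d v x‖ ^ 2)
          - ‖rder d v x - Complex.I * (k : ℂ) * v x‖ ^ 2)
      (fun y => clap d v y + (k : ℂ) ^ 2 * v y)
      (fun y => (∑ i, ((y i : ℝ) : ℂ) * cpd d v i y)
        - Complex.I * (k : ℂ) * ((‖y‖ : ℝ) : ℂ) * v y + (α : ℂ) * v y)
      (fun y => WithLp.toLp 2 (fun i =>
          2 * (conj ((∑ i', ((y i' : ℝ) : ℂ) * cpd d v i' y)
                - Complex.I * (k : ℂ) * ((‖y‖ : ℝ) : ℂ) * v y + (α : ℂ) * v y)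
              * cpd d v i y).re
            + (k ^ 2 * ‖v y‖ ^ 2 - gradsq d v y) * y i : Fin d → ℝ)) := by
  -- basic facts
  have hx0 : x ≠ 0 := hD0 hx
  have hxD : D ∈ nhds x := hD.mem_nhds hx
  have hr0 : (0:ℝ) < ‖x‖ := norm_pos_iff.2 hx0
  have hrne : ‖x‖ ≠ 0 := ne_of_gt hr0
  have hvx : ContDiffAt ℝ 2 v x := hv.contDiffAt hxD
  have dv : DifferentiableAt ℝ v x := hvx.differentiableAt (by norm_num)
  have hf1 : ContDiffOn ℝ 1 (fun y => fderiv ℝ v y) D := hv.fderiv_of_isOpen hD (by norm_num)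
  have hf1x : DifferentiableAt ℝ (fun y => fderiv ℝ v y) x :=
    (hf1.contDiffAt hxD).differentiableAt one_ne_zero
  have da : ∀ j : Fin d, DifferentiableAt ℝ (cpd d v j) x := by
    intro j
    exact hf1x.clm_apply (differentiableAt_const (EuclideanSpace.single j 1))
  have hBsing : ∀ i j : Fin d, cpd d (cpd d v j) i x
      = fderiv ℝ (fun y => fderiv ℝ v y) x (EuclideanSpace.single i 1)
          (EuclideanSpace.single j 1) := by
    intro i j
    have h := fderiv_clm_apply hf1x
      (differentiableAt_const (EuclideanSpace.single (𝕜 := ℝ) j (1:ℝ)))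
    calc cpd d (cpd d v j) i x
        = fderiv ℝ (fun y => (fderiv ℝ v y) (EuclideanSpace.single j 1)) x
            (EuclideanSpace.single i 1) := rfl
      _ = _ := by rw [h]; simp
  have hsymmB : ∀ i j : Fin d, cpd d (cpd d v j) i x = cpd d (cpd d v i) j x := by
    intro i j
    rw [hBsing i j, hBsing j i]
    exact (hvx.isSymmSndFDerivAt (by simp)) _ _
  -- differentiability of building blocks
  have dnorm : DifferentiableAt ℝ (fun y : EuclideanSpace ℝ (Fin d) => ‖y‖) x :=
    (hasFDerivAt_norm_euc hx0).differentiableAt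
  have dnormC : DifferentiableAt ℝ (fun y : EuclideanSpace ℝ (Fin d) => ((‖y‖:ℝ):ℂ)) x :=
    diffAt_ofReal dnorm
  have dcoord : ∀ j : Fin d,
      DifferentiableAt ℝ (fun y : EuclideanSpace ℝ (Fin d) => ((y j : ℝ):ℂ)) x :=
    fun j => diffAt_ofReal (hasFDerivAt_proj j).differentiableAt
  have dsum1 : DifferentiableAt ℝ
      (fun y : EuclideanSpace ℝ (Fin d) => ∑ j, ((y j : ℝ):ℂ) * cpd d v j y) x :=
    DifferentiableAt.fun_sum fun j _ => (dcoord j).mul (da j)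
  have dterm2 : DifferentiableAt ℝ
      (fun y : EuclideanSpace ℝ (Fin d) => Complex.I * (k:ℂ) * ((‖y‖:ℝ):ℂ) * v y) x :=
    ((differentiableAt_const _).mul dnormC).mul dv
  have dterm3 : DifferentiableAt ℝ
      (fun y : EuclideanSpace ℝ (Fin d) => (α:ℂ) * v y) x :=
    (differentiableAt_const _).mul dv
  set Mf : EuclideanSpace ℝ (Fin d) → ℂ := fun y =>
    (∑ j, ((y j : ℝ):ℂ) * cpd d v j y)
      - Complex.I * (k:ℂ) * ((‖y‖:ℝ):ℂ) * v y + (α:ℂ) * v y with hMf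
  have dM : DifferentiableAt ℝ Mf x := (dsum1.sub dterm2).add dterm3
  have hMi : ∀ i : Fin d, cpd d Mf i x
      = cpd d v i x + (∑ j, ((x j : ℝ):ℂ) * cpd d (cpd d v j) i x)
        - Complex.I * (k:ℂ) * ((x i / ‖x‖ : ℝ):ℂ) * v x
        - Complex.I * (k:ℂ) * ((‖x‖:ℝ):ℂ) * cpd d v i x
        + (α:ℂ) * cpd d v i x := by
    intro i
    rw [hMf]
    rw [cpd_add (dsum1.fun_sub dterm2) dterm3, cpd_sub dsum1 dterm2,
        cpd_sum (fun j _ => (dcoord j).fun_mul (da j)), cpd_const_mul dv]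
    have h1 : ∀ j : Fin d,
        cpd d (fun y => ((y j : ℝ):ℂ) * cpd d v j y) i x
          = ((x j : ℝ):ℂ) * cpd d (cpd d v j) i x
            + cpd d v j x * (if j = i then (1:ℂ) else 0) := by
      intro j; rw [cpd_mul (dcoord j) (da j), cpd_coord]
    have h2 : cpd d (fun y : EuclideanSpace ℝ (Fin d) =>
        Complex.I * (k:ℂ) * ((‖y‖:ℝ):ℂ) * v y) i x
          = Complex.I * (k:ℂ) * ((‖x‖:ℝ):ℂ) * cpd d v i x
            + v x * (Complex.I * (k:ℂ) * ((x i / ‖x‖ : ℝ):ℂ)) := by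
      rw [cpd_mul ((differentiableAt_const _).fun_mul dnormC) dv,
          cpd_const_mul dnormC, cpd_norm hx0]
    rw [Finset.sum_congr rfl (fun j _ => h1 j), h2, Finset.sum_add_distrib]
    have h3 : (∑ j : Fin d, cpd d v j x * (if j = i then (1:ℂ) else 0)) = cpd d v i x := by
      simp
    rw [h3]
    ring
  set Cf : EuclideanSpace ℝ (Fin d) → ℂ := fun y =>
    (k:ℂ)^2 * (v y * conj (v y)) - ∑ j, cpd d v j y * conj (cpd d v j y) with hCf
  have dC : DifferentiableAt ℝ Cf x :=
    ((differentiableAt_const _).mul (dv.mul (diffAt_conj dv))).sub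
      (DifferentiableAt.fun_sum fun j _ => (da j).mul (diffAt_conj (da j)))
  have hCi : ∀ i : Fin d, cpd d Cf i x
      = (k:ℂ)^2 * (v x * conj (cpd d v i x) + conj (v x) * cpd d v i x)
        - ∑ j, (cpd d v j x * conj (cpd d (cpd d v j) i x)
            + conj (cpd d v j x) * cpd d (cpd d v j) i x) := by
    intro i
    rw [hCf]
    rw [cpd_sub ((differentiableAt_const _).fun_mul (dv.fun_mul (diffAt_conj dv)))
        (DifferentiableAt.fun_sum fun j _ => (da j).fun_mul (diffAt_conj (da j))),
      cpd_const_mul (dv.fun_mul (diffAt_conj dv)), cpd_mul dv (diffAt_conj dv), cpd_conj dv,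
      cpd_sum (fun j _ => (da j).fun_mul (diffAt_conj (da j)))]
    congr 1
    refine Finset.sum_congr rfl fun j _ => ?_
    rw [cpd_mul (da j) (diffAt_conj (da j)), cpd_conj (da j)]
  set Hf : Fin d → EuclideanSpace ℝ (Fin d) → ℂ := fun i y =>
    2 * (conj (Mf y) * cpd d v i y) + Cf y * ((y i : ℝ):ℂ) with hHf
  have dH : ∀ i : Fin d, DifferentiableAt ℝ (Hf i) x := fun i =>
    ((differentiableAt_const 2).mul ((diffAt_conj dM).mul (da i))).add (dC.mul (dcoord i))
  have hHi : ∀ i : Fin d, cpd d (Hf i) i x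
      = 2 * (conj (Mf x) * cpd d (cpd d v i) i x + cpd d v i x * conj (cpd d Mf i x))
        + (Cf x + ((x i : ℝ):ℂ) * cpd d Cf i x) := by
    intro i
    rw [hHf]
    rw [cpd_add ((differentiableAt_const 2).fun_mul ((diffAt_conj dM).fun_mul (da i)))
        (dC.fun_mul (dcoord i)),
      cpd_const_mul ((diffAt_conj dM).fun_mul (da i)),
      cpd_mul (diffAt_conj dM) (da i), cpd_conj dM,
      cpd_mul dC (dcoord i), cpd_coord]
    simp
  have hCreal : ∀ y, Cf y = ((k^2 * ‖v y‖^2 - gradsq d v y : ℝ):ℂ) := by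
    intro y
    rw [hCf]
    have h1 : ∀ z : ℂ, z * conj z = ((‖z‖^2 : ℝ):ℂ) := fun z => by
      rw [Complex.mul_conj]
      norm_cast
      rw [Complex.sq_norm]
    simp only [h1, gradsq]
    push_cast
    ring
  have hGfun : (fun y => WithLp.toLp 2 (fun i =>
          2 * (conj ((∑ i', ((y i' : ℝ) : ℂ) * cpd d v i' y)
                - Complex.I * (k : ℂ) * ((‖y‖ : ℝ) : ℂ) * v y + (α : ℂ) * v y)
              * cpd d v i y).re
            + (k ^ 2 * ‖v y‖ ^ 2 - gradsq d v y) * y i : Fin d → ℝ))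
      = (fun y => WithLp.toLp 2 (fun i => ((Hf i) y).re : Fin d → ℝ)) := by
    funext y; ext i
    show 2 * (conj (Mf y) * cpd d v i y).re + (k ^ 2 * ‖v y‖ ^ 2 - gradsq d v y) * y i
      = (2 * (conj (Mf y) * cpd d v i y) + Cf y * ((y i : ℝ):ℂ)).re
    rw [Complex.add_re, hCreal y, ← Complex.ofReal_mul, Complex.ofReal_re]
    have : (2 * (conj (Mf y) * cpd d v i y)).re = 2 * (conj (Mf y) * cpd d v i y).re := by
      simp [Complex.mul_re]
    rw [this]
  have hre : ∀ i : Fin d, HasFDerivAt (fun y => ((Hf i) y).re)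
      (Complex.reCLM.comp (fderiv ℝ (Hf i) x)) x := fun i =>
    Complex.reCLM.hasFDerivAt.comp x (dH i).hasFDerivAt
  have hpi : HasFDerivAt (fun y => (fun i => ((Hf i) y).re : Fin d → ℝ))
      (ContinuousLinearMap.pi fun i => Complex.reCLM.comp (fderiv ℝ (Hf i) x)) x :=
    hasFDerivAt_pi.2 hre
  have hGE : HasFDerivAt (E := EuclideanSpace ℝ (Fin d)) (F := EuclideanSpace ℝ (Fin d))
      (fun y => WithLp.toLp 2 (fun i => ((Hf i) y).re : Fin d → ℝ))
      ((PiLp.continuousLinearEquiv 2 ℝ (fun _ : Fin d => ℝ)).symm.toContinuousLinearMap.comp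
        (ContinuousLinearMap.pi fun i => Complex.reCLM.comp (fderiv ℝ (Hf i) x))) x :=
    (PiLp.continuousLinearEquiv 2 ℝ (fun _ : Fin d => ℝ)).symm.toContinuousLinearMap
      |>.hasFDerivAt.comp x hpi
  have hvdiv : vdiv d (fun y => WithLp.toLp 2 (fun i => ((Hf i) y).re : Fin d → ℝ)) x
      = ∑ i, (cpd d (Hf i) i x).re := by
    unfold vdiv
    refine Finset.sum_congr rfl fun i _ => ?_
    rw [hGE.fderiv]
    simp [cpd]
  -- abbreviations for the algebra
  have hzz : ∀ z : ℂ, z * conj z = ((‖z‖^2 : ℝ):ℂ) := fun z => by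
    rw [Complex.mul_conj]
    norm_cast
    rw [Complex.sq_norm]
  set S : ℂ := ∑ j, ((x j : ℝ):ℂ) * cpd d v j x with hS
  set P : ℂ := ∑ i, cpd d v i x * (∑ j, ((x j : ℝ):ℂ) * conj (cpd d (cpd d v j) i x)) with hP
  have hgsum : (∑ i, cpd d v i x * conj (cpd d v i x)) = ((gradsq d v x : ℝ):ℂ) := by
    simp only [hzz]
    rw [gradsq]
    push_cast
    rfl
  have hconjS : (∑ i, ((x i : ℝ):ℂ) * conj (cpd d v i x)) = conj S := by
    rw [hS, map_sum]
    exact Finset.sum_congr rfl fun i _ => by rw [map_mul, Complex.conj_ofReal]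
  have hCx : Cf x = ((k:ℂ))^2 * (v x * conj (v x)) - ((gradsq d v x : ℝ):ℂ) := by
    rw [hCf, ← hgsum]
  have hMc : ∀ i : Fin d, conj (cpd d Mf i x)
      = conj (cpd d v i x) + (∑ j, ((x j : ℝ):ℂ) * conj (cpd d (cpd d v j) i x))
        + Complex.I * (k:ℂ) * ((x i / ‖x‖ : ℝ):ℂ) * conj (v x)
        + Complex.I * (k:ℂ) * ((‖x‖:ℝ):ℂ) * conj (cpd d v i x)
        + (α:ℂ) * conj (cpd d v i x) := by
    intro i
    rw [hMi i]
    simp only [map_add, map_sub, map_sum, map_mul, Complex.conj_conj, Complex.conj_I,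
      Complex.conj_ofReal]
    ring
  have expand : ∀ i : Fin d, cpd d (Hf i) i x =
      2 * conj (Mf x) * cpd d (cpd d v i) i x
      + 2 * (cpd d v i x * conj (cpd d v i x))
      + 2 * (cpd d v i x * (∑ j, ((x j : ℝ):ℂ) * conj (cpd d (cpd d v j) i x)))
      + 2 * Complex.I * (k:ℂ) * (((x i : ℝ):ℂ) / ((‖x‖:ℝ):ℂ)) * (conj (v x) * cpd d v i x)
      + 2 * Complex.I * (k:ℂ) * ((‖x‖:ℝ):ℂ) * (cpd d v i x * conj (cpd d v i x))
      + 2 * (α:ℂ) * (cpd d v i x * conj (cpd d v i x))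
      + Cf x
      + (k:ℂ)^2 * ((((x i : ℝ):ℂ) * cpd d v i x) * conj (v x))
      + (k:ℂ)^2 * (v x * (((x i : ℝ):ℂ) * conj (cpd d v i x)))
      - ((x i : ℝ):ℂ) * (∑ j, (cpd d v j x * conj (cpd d (cpd d v j) i x)
          + conj (cpd d v j x) * cpd d (cpd d v j) i x)) := by
    intro i
    rw [hHi i, hMc i, hCi i]
    push_cast
    ring
  -- the three sums requiring symmetry of second derivatives
  have c10 : (∑ i, ((x i : ℝ):ℂ) * (∑ j, (cpd d v j x * conj (cpd d (cpd d v j) i x)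
        + conj (cpd d v j x) * cpd d (cpd d v j) i x))) = P + conj P := by
    have hconjP : conj P = ∑ i, conj (cpd d v i x)
        * (∑ j, ((x j : ℝ):ℂ) * cpd d (cpd d v j) i x) := by
      rw [hP, map_sum]
      refine Finset.sum_congr rfl fun i _ => ?_
      rw [map_mul, map_sum]
      congr 1
      exact Finset.sum_congr rfl fun j _ => by
        rw [map_mul, Complex.conj_ofReal, Complex.conj_conj]
    have split : (∑ i, ((x i : ℝ):ℂ) * (∑ j, (cpd d v j x * conj (cpd d (cpd d v j) i x)
          + conj (cpd d v j x) * cpd d (cpd d v j) i x)))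
        = (∑ i, ∑ j, ((x i : ℝ):ℂ) * (cpd d v j x * conj (cpd d (cpd d v j) i x)))
          + (∑ i, ∑ j, ((x i : ℝ):ℂ) * (conj (cpd d v j x) * cpd d (cpd d v j) i x)) := by
      rw [← Finset.sum_add_distrib]
      refine Finset.sum_congr rfl fun i _ => ?_
      rw [← Finset.sum_add_distrib, Finset.mul_sum]
      exact Finset.sum_congr rfl fun j _ => by ring
    rw [split]
    have h1 : (∑ i, ∑ j, ((x i : ℝ):ℂ) * (cpd d v j x * conj (cpd d (cpd d v j) i x))) = P := by
      rw [Finset.sum_comm, hP]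
      refine Finset.sum_congr rfl fun a _ => ?_
      rw [Finset.mul_sum]
      refine Finset.sum_congr rfl fun b _ => ?_
      rw [hsymmB b a]
      ring
    have h2 : (∑ i, ∑ j, ((x i : ℝ):ℂ) * (conj (cpd d v j x) * cpd d (cpd d v j) i x))
        = conj P := by
      rw [Finset.sum_comm, hconjP]
      refine Finset.sum_congr rfl fun a _ => ?_
      rw [Finset.mul_sum]
      refine Finset.sum_congr rfl fun b _ => ?_
      rw [hsymmB b a]
      ring
    rw [h1, h2]
  have c1 : (∑ i, 2 * conj (Mf x) * cpd d (cpd d v i) i x)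
      = 2 * conj (Mf x) * clap d v x := by
    rw [← Finset.mul_sum]; rfl
  have c2 : (∑ i, 2 * (cpd d v i x * conj (cpd d v i x)))
      = 2 * ((gradsq d v x : ℝ):ℂ) := by
    rw [← Finset.mul_sum, hgsum]
  have c3 : (∑ i, 2 * (cpd d v i x * (∑ j, ((x j : ℝ):ℂ) * conj (cpd d (cpd d v j) i x))))
      = 2 * P := by
    rw [← Finset.mul_sum, ← hP]
  have c4 : (∑ i, 2 * Complex.I * (k:ℂ) * (((x i : ℝ):ℂ) / ((‖x‖:ℝ):ℂ))
        * (conj (v x) * cpd d v i x))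
      = 2 * Complex.I * (k:ℂ) * conj (v x) * S / ((‖x‖:ℝ):ℂ) := by
    have per : ∀ i : Fin d, 2 * Complex.I * (k:ℂ) * (((x i : ℝ):ℂ) / ((‖x‖:ℝ):ℂ))
        * (conj (v x) * cpd d v i x)
        = (2 * Complex.I * (k:ℂ) * conj (v x) / ((‖x‖:ℝ):ℂ))
            * (((x i : ℝ):ℂ) * cpd d v i x) := fun i => by ring
    rw [Finset.sum_congr rfl fun i _ => per i, ← Finset.mul_sum, ← hS]
    ring
  have c5 : (∑ i, 2 * Complex.I * (k:ℂ) * ((‖x‖:ℝ):ℂ) * (cpd d v i x * conj (cpd d v i x)))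
      = 2 * Complex.I * (k:ℂ) * ((‖x‖:ℝ):ℂ) * ((gradsq d v x : ℝ):ℂ) := by
    rw [← Finset.mul_sum, hgsum]
  have c6 : (∑ i, 2 * (α:ℂ) * (cpd d v i x * conj (cpd d v i x)))
      = 2 * (α:ℂ) * ((gradsq d v x : ℝ):ℂ) := by
    rw [← Finset.mul_sum, hgsum]
  have c7 : (∑ _i : Fin d, Cf x) = (d:ℂ) * Cf x := by
    rw [Finset.sum_const, Finset.card_univ, Fintype.card_fin, nsmul_eq_mul]
  have c8 : (∑ i, (k:ℂ)^2 * ((((x i : ℝ):ℂ) * cpd d v i x) * conj (v x)))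
      = (k:ℂ)^2 * (S * conj (v x)) := by
    have per : ∀ i : Fin d, (k:ℂ)^2 * ((((x i : ℝ):ℂ) * cpd d v i x) * conj (v x))
        = ((k:ℂ)^2 * conj (v x)) * (((x i : ℝ):ℂ) * cpd d v i x) := fun i => by ring
    rw [Finset.sum_congr rfl fun i _ => per i, ← Finset.mul_sum, ← hS]
    ring
  have c9 : (∑ i, (k:ℂ)^2 * (v x * (((x i : ℝ):ℂ) * conj (cpd d v i x))))
      = (k:ℂ)^2 * (v x * conj S) := by
    have per : ∀ i : Fin d, (k:ℂ)^2 * (v x * (((x i : ℝ):ℂ) * conj (cpd d v i x)))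
        = ((k:ℂ)^2 * v x) * (((x i : ℝ):ℂ) * conj (cpd d v i x)) := fun i => by ring
    rw [Finset.sum_congr rfl fun i _ => per i, ← Finset.mul_sum, hconjS]
    ring
  have hsplit : (∑ i, cpd d (Hf i) i x)
      = 2 * conj (Mf x) * clap d v x
        + 2 * ((gradsq d v x : ℝ):ℂ)
        + 2 * P
        + 2 * Complex.I * (k:ℂ) * conj (v x) * S / ((‖x‖:ℝ):ℂ)
        + 2 * Complex.I * (k:ℂ) * ((‖x‖:ℝ):ℂ) * ((gradsq d v x : ℝ):ℂ)
        + 2 * (α:ℂ) * ((gradsq d v x : ℝ):ℂ)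
        + (d:ℂ) * Cf x
        + (k:ℂ)^2 * (S * conj (v x))
        + (k:ℂ)^2 * (v x * conj S)
        - (P + conj P) := by
    rw [Finset.sum_congr rfl fun i _ => expand i, Finset.sum_sub_distrib, c10]
    simp only [Finset.sum_add_distrib]
    rw [c1, c2, c3, c4, c5, c6, c7, c8, c9]
  have hMx : Mf x = S - Complex.I * (k:ℂ) * ((‖x‖:ℝ):ℂ) * v x + (α:ℂ) * v x := by
    rw [hMf, hS]
  have hrder : rder d v x = S / ((‖x‖:ℝ):ℂ) := by
    rw [hS]; rfl
  have hns : ∀ z : ℂ, ‖z‖^2 = z.re^2 + z.im^2 := fun z => by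
    rw [Complex.sq_norm, Complex.normSq_apply]; ring
  rw [hGfun]
  show 2 * (conj (Mf x) * (clap d v x + (k:ℂ)^2 * v x)).re
      = vdiv d (fun y => WithLp.toLp 2 (fun i => ((Hf i) y).re : Fin d → ℝ)) x
        + (2 * α - ((d:ℝ) - 1)) * (k^2 * ‖v x‖^2 - gradsq d v x)
        - (gradsq d v x - ‖rder d v x‖^2)
        - ‖rder d v x - Complex.I * (k:ℂ) * v x‖^2
  rw [hvdiv, ← Complex.re_sum, hsplit, hMx, hrder, hCx]
  simp only [hns]
  simp only [Complex.add_re, Complex.add_im, Complex.sub_re, Complex.sub_im, Complex.mul_re,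
    Complex.mul_im, Complex.div_re, Complex.div_im, Complex.I_re, Complex.I_im,
    Complex.ofReal_re, Complex.ofReal_im, Complex.conj_re, Complex.conj_im,
    Complex.normSq_apply, Complex.re_ofNat, Complex.im_ofNat, Complex.natCast_re,
    Complex.natCast_im, pow_two]
  field_simp
  ring
end
end

section
/- Let d ≥ 2, 0 < R0 < R1, let χ be an admissible transition function for (R0, R1), and let Z be the associated vector field Z(x) := x_d (1 − χ(|x|)) e_d + χ(|x|) x. Then for every x ≠ 0 and every ℂ-valued function u differentiable at x, with r := |x|, Σ_{i,j=1}^d (∂_i Z_j)(x) (∂_i u)(x) conj((∂_j u)(x)) = |∂_d u(x)|² (1 − χ(r)) + |∇u(x)|² χ(r) + ( r |∂_r u(x)|² − x_d ∂_r u(x) conj(∂_d u(x)) ) χ′(r). -/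
open scoped BigOperators ComplexConjugate

noncomputable section

/-- The vector field `Z(x) = x_d (1 − χ(|x|)) e_d + χ(|x|) x`. -/
def Zfield (d : ℕ) (ld : Fin d) (χ : ℝ → ℝ) (x : EuclideanSpace ℝ (Fin d)) :
    EuclideanSpace ℝ (Fin d) :=
  (x ld * (1 - χ ‖x‖)) • EuclideanSpace.single ld 1 + χ ‖x‖ • x

/-- Derivative of the norm away from the origin, in a real inner product space. -/
lemma hasFDerivAt_norm_ne_zero' {E : Type*} [NormedAddCommGroup E] [InnerProductSpace ℝ E]
    {x : E} (hx : x ≠ 0) :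
    HasFDerivAt (fun y : E => ‖y‖) ((‖x‖⁻¹ : ℝ) • innerSL ℝ x) x := by
  have h1 : HasFDerivAt (fun y : E => ‖y‖ ^ 2) (2 • innerSL ℝ x) x := by
    have := (hasFDerivAt_id x).norm_sq
    simpa using this
  have hsq : (‖x‖ : ℝ) ^ 2 ≠ 0 := pow_ne_zero _ (norm_ne_zero_iff.2 hx)
  have h2 := (Real.hasDerivAt_sqrt hsq).comp_hasFDerivAt x h1
  have hfun : (fun y : E => Real.sqrt (‖y‖ ^ 2)) = fun y : E => ‖y‖ := by
    funext y; rw [Real.sqrt_sq (norm_nonneg y)]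
  rw [show ((fun x => Real.sqrt x) ∘ fun y : E => ‖y‖ ^ 2) = fun y : E => ‖y‖ from hfun] at h2
  refine h2.congr_fderiv ?_
  rw [Real.sqrt_sq (norm_nonneg x)]
  ext y
  simp [smul_smul]
  ring

/-- Entries of the Jacobian of `Zfield` at a point `x ≠ 0`. -/
lemma Zfield_fderiv_entry (d : ℕ) (ld : Fin d) (χ : ℝ → ℝ)
    (hχ3 : ContDiffOn ℝ 3 χ (Set.Ici 0))
    (x : EuclideanSpace ℝ (Fin d)) (hx : x ≠ 0) (i j : Fin d) :
    fderiv ℝ (Zfield d ld χ) x (EuclideanSpace.single i 1) j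
      = χ ‖x‖ * (if j = i then 1 else 0)
        + (deriv χ ‖x‖ / ‖x‖) * x i * x j
        + (if j = ld then
            ((1 - χ ‖x‖) * (if i = ld then 1 else 0)
              - x ld * (deriv χ ‖x‖ / ‖x‖) * x i) else 0) := by
  set r := ‖x‖ with hrdef
  have hr : 0 < r := norm_pos_iff.2 hx
  set c := deriv χ r with hcdef
  have hχat : ContDiffAt ℝ 3 χ r := hχ3.contDiffAt (Ici_mem_nhds hr)
  have hχd : HasDerivAt χ c r := (hχat.differentiableAt (by norm_num)).hasDerivAt
  set N : EuclideanSpace ℝ (Fin d) →L[ℝ] ℝ := (r⁻¹ : ℝ) • innerSL ℝ x with hNdef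
  have hn : HasFDerivAt (fun y : EuclideanSpace ℝ (Fin d) => ‖y‖) N x :=
    hasFDerivAt_norm_ne_zero' hx
  have hcn : HasFDerivAt (fun y : EuclideanSpace ℝ (Fin d) => χ ‖y‖) (c • N) x :=
    hχd.comp_hasFDerivAt x hn
  have hone : HasFDerivAt (fun y : EuclideanSpace ℝ (Fin d) => (1 : ℝ) - χ ‖y‖)
      ((0 : EuclideanSpace ℝ (Fin d) →L[ℝ] ℝ) - c • N) x :=
    (hasFDerivAt_const 1 x).sub hcn
  have hproj : HasFDerivAt (fun y : EuclideanSpace ℝ (Fin d) => y ld)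
      (EuclideanSpace.proj (𝕜 := ℝ) ld) x := by
    simpa using (EuclideanSpace.proj (𝕜 := ℝ) (ι := Fin d) ld).hasFDerivAt (x := x)
  have h1 := hproj.mul hone
  have h2 := h1.smul_const (EuclideanSpace.single ld (1:ℝ))
  have h3 := hcn.smul (hasFDerivAt_id x)
  have hZ := h2.add h3
  have hZ' : HasFDerivAt (Zfield d ld χ) _ x := hZ
  rw [hZ'.fderiv]
  simp only [ContinuousLinearMap.add_apply, ContinuousLinearMap.smulRight_apply,
    ContinuousLinearMap.smul_apply, ContinuousLinearMap.sub_apply,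
    ContinuousLinearMap.zero_apply, ContinuousLinearMap.id_apply,
    hNdef, innerSL_apply_apply,
    EuclideanSpace.inner_single_right, RCLike.inner_apply, conj_trivial,
    PiLp.add_apply, PiLp.smul_apply, EuclideanSpace.single_apply, smul_eq_mul]
  rw [show (EuclideanSpace.proj (𝕜 := ℝ) ld) (EuclideanSpace.single i (1:ℝ))
      = (if i = ld then (1:ℝ) else 0) from by simp [EuclideanSpace.single_apply, eq_comm]]
  simp only [id_eq, ← hrdef, div_eq_mul_inv]
  split_ifs <;> ring

/-- The quadratic-form identity, for an arbitrary distinguished index `ld`. -/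
lemma Zfield_quadratic_form_aux (d : ℕ) (ld : Fin d) (χ : ℝ → ℝ)
    (hχ3 : ContDiffOn ℝ 3 χ (Set.Ici 0))
    (x : EuclideanSpace ℝ (Fin d)) (hx : x ≠ 0)
    (u : EuclideanSpace ℝ (Fin d) → ℂ) :
    ∑ i, ∑ j,
        ((fderiv ℝ (Zfield d ld χ) x (EuclideanSpace.single i 1) j : ℝ) : ℂ)
          * cpd d u i x * conj (cpd d u j x)
      = ((‖cpd d u ld x‖ ^ 2 : ℝ) : ℂ) * ((1 - χ ‖x‖ : ℝ) : ℂ)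
        + ((gradsq d u x : ℝ) : ℂ) * ((χ ‖x‖ : ℝ) : ℂ)
        + (((‖x‖ : ℝ) : ℂ) * ((‖rder d u x‖ ^ 2 : ℝ) : ℂ)
            - ((x ld : ℝ) : ℂ) * rder d u x * conj (cpd d u ld x))
          * ((deriv χ ‖x‖ : ℝ) : ℂ) := by
  have hent := Zfield_fderiv_entry d ld χ hχ3 x hx
  set r := ‖x‖ with hrdef
  have hr : 0 < r := norm_pos_iff.2 hx
  have hrC : ((r : ℝ) : ℂ) ≠ 0 := by exact_mod_cast hr.ne'
  set c := deriv χ r with hcdef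
  set U : Fin d → ℂ := fun i => cpd d u i x with hU
  set X : Fin d → ℂ := fun i => ((x i : ℝ) : ℂ) with hX
  set S : ℂ := ∑ i, X i * U i with hS
  have hconjS : conj S = ∑ j, X j * conj (U j) := by
    rw [hS, map_sum]
    exact Finset.sum_congr rfl fun j _ => by simp [hX]
  have hrd : rder d u x = S / ((r : ℝ) : ℂ) := rfl
  have hgs : ((gradsq d u x : ℝ) : ℂ) = ∑ i, U i * conj (U i) := by
    rw [gradsq]; push_cast
    exact Finset.sum_congr rfl fun i _ => by push_cast; exact (Complex.mul_conj' _).symm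
  have hUld : ((‖cpd d u ld x‖ ^ 2 : ℝ) : ℂ) = U ld * conj (U ld) := by
    push_cast; exact (Complex.mul_conj' _).symm
  have hrder2 : ((‖rder d u x‖ ^ 2 : ℝ) : ℂ) = rder d u x * conj (rder d u x) := by
    push_cast; exact (Complex.mul_conj' _).symm
  have hLHS : ∑ i, ∑ j,
        ((fderiv ℝ (Zfield d ld χ) x (EuclideanSpace.single i 1) j : ℝ) : ℂ)
          * cpd d u i x * conj (cpd d u j x)
      = ∑ i, ∑ j,
        (((χ r : ℝ) : ℂ) * (if j = i then 1 else 0)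
          + ((c / r : ℝ) : ℂ) * X i * X j
          + (if j = ld then
              (((1 - χ r : ℝ)) : ℂ) * (if i = ld then 1 else 0)
                - ((x ld : ℝ) : ℂ) * ((c / r : ℝ) : ℂ) * X i else 0))
          * U i * conj (U j) := by
    refine Finset.sum_congr rfl fun i _ => Finset.sum_congr rfl fun j _ => ?_
    rw [hent i j]
    push_cast
    split_ifs <;> push_cast <;> ring
  rw [hLHS]
  simp only [add_mul, sub_mul, ite_mul, zero_mul, mul_ite, mul_zero, mul_one,
    Finset.sum_add_distrib, Finset.sum_sub_distrib, Finset.sum_ite_eq,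
    Finset.sum_ite_eq', Finset.mem_univ, if_true]
  have h1 : ∑ i, ((χ r : ℝ) : ℂ) * U i * conj (U i) = ((χ r : ℝ) : ℂ) * ∑ i, U i * conj (U i) := by
    rw [Finset.mul_sum]
    exact Finset.sum_congr rfl fun i _ => (mul_assoc _ _ _)
  have h2 : ∑ i, ∑ j, ((c / r : ℝ) : ℂ) * X i * X j * U i * conj (U j)
      = ((c / r : ℝ) : ℂ) * (S * conj S) := by
    rw [hconjS, hS, Finset.sum_mul_sum, Finset.mul_sum]
    refine Finset.sum_congr rfl fun i _ => ?_
    rw [Finset.mul_sum]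
    exact Finset.sum_congr rfl fun j _ => by ring
  have h3 : ∑ j, ((x ld : ℝ) : ℂ) * ((c / r : ℝ) : ℂ) * X j * U j * conj (U ld)
      = ((x ld : ℝ) : ℂ) * ((c / r : ℝ) : ℂ) * S * conj (U ld) := by
    rw [hS, Finset.mul_sum, Finset.sum_mul]
    exact Finset.sum_congr rfl fun j _ => by ring
  rw [h1, h2, h3, hUld, hgs, hrder2, hrd]
  have hcU : conj (U ld) = conj (cpd d u ld x) := rfl
  rw [← hcU]
  simp only [map_div₀, Complex.conj_ofReal]
  push_cast
  field_simp
  ring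

/-- For the vector field `Z(x) = x_d(1 − χ(|x|))e_d + χ(|x|)x` associated with an
admissible transition function `χ` for `(R0, R1)`, for every `x ≠ 0` and every
`ℂ`-valued `u` differentiable at `x`, with `r = |x|`:
`Σ_{i,j} ∂_i Z_j ∂_i u conj(∂_j u)`
`= |∂_d u|²(1 − χ(r)) + |∇u|²χ(r) + (r|∂_r u|² − x_d ∂_r u conj(∂_d u))χ′(r)`. -/
theorem Zfield_quadratic_form (d : ℕ) (hd : 2 ≤ d) (R0 R1 : ℝ) (hR0 : 0 < R0)
    (hR01 : R0 < R1) (χ : ℝ → ℝ) (hχ : IsAdmissibleTransition R0 R1 χ)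
    (x : EuclideanSpace ℝ (Fin d)) (hx : x ≠ 0)
    (u : EuclideanSpace ℝ (Fin d) → ℂ) (hu : DifferentiableAt ℝ u x) :
    ∑ i, ∑ j,
        ((fderiv ℝ (Zfield d ⟨d - 1, by omega⟩ χ) x (EuclideanSpace.single i 1) j : ℝ) : ℂ)
          * cpd d u i x * conj (cpd d u j x)
      = ((‖cpd d u ⟨d - 1, by omega⟩ x‖ ^ 2 : ℝ) : ℂ) * ((1 - χ ‖x‖ : ℝ) : ℂ)
        + ((gradsq d u x : ℝ) : ℂ) * ((χ ‖x‖ : ℝ) : ℂ)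
        + (((‖x‖ : ℝ) : ℂ) * ((‖rder d u x‖ ^ 2 : ℝ) : ℂ)
            - ((x ⟨d - 1, by omega⟩ : ℝ) : ℂ) * rder d u x
              * conj (cpd d u ⟨d - 1, by omega⟩ x))
          * ((deriv χ ‖x‖ : ℝ) : ℂ) :=
  Zfield_quadratic_form_aux d ⟨d - 1, by omega⟩ χ hχ.contDiffOn x hx u
end
end

section
/- There exists a constant C > 0 such that for every k ≥ 1, ∫₀^∞ (1+r)^{−2} |k² − r²|^{−1/2} dr ≤ C/k; in particular, the improper integral on the left-hand side is finite for every k ≥ 1 (the integrand has an integrable singularity at r = k). -/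
open MeasureTheory
open Set intervalIntegral

-- base integral: ∫_{Ioi 0} (1+r)^{-2} = 1, integrable
lemma base_int : IntegrableOn (fun r : ℝ => ((1 + r) ^ 2)⁻¹) (Set.Ioi (0:ℝ)) volume ∧
    ∫ r in Set.Ioi (0:ℝ), ((1 + r) ^ 2)⁻¹ = 1 := by
  have hderiv : ∀ x ∈ Set.Ici (0:ℝ), HasDerivAt (fun x : ℝ => -(1 + x)⁻¹) (((1 + x) ^ 2)⁻¹) x := by
    intro x hx
    have h1 : (1:ℝ) + x ≠ 0 := by simp only [Set.mem_Ici] at hx; positivity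
    have h2 := (((hasDerivAt_id x).const_add 1).inv h1).neg
    convert h2 using 1
    · rfl
    · rfl
    · funext y; simp
    · simp only [id]; ring
  have hpos : ∀ x ∈ Set.Ioi (0:ℝ), 0 ≤ ((1 + x) ^ 2)⁻¹ := by
    intro x hx; positivity
  have htend : Filter.Tendsto (fun x : ℝ => -(1 + x)⁻¹) Filter.atTop (nhds 0) := by
    have : Filter.Tendsto (fun x : ℝ => (1 + x)⁻¹) Filter.atTop (nhds 0) :=
      Filter.Tendsto.inv_tendsto_atTop (Filter.tendsto_atTop_add_const_left _ 1 Filter.tendsto_id)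
    simpa using this.neg
  refine ⟨integrableOn_Ioi_deriv_of_nonneg' hderiv hpos htend, ?_⟩
  have := integral_Ioi_of_hasDerivAt_of_nonneg' hderiv hpos htend
  simpa using this
open MeasureTheory Set intervalIntegral

lemma mid_int (k : ℝ) (hk : 1 ≤ k) :
    IntegrableOn (fun r : ℝ => |k - r| ^ (-(1/2) : ℝ)) (Set.Ioc (k/2) (2*k)) volume ∧
    ∫ r in Set.Ioc (k/2) (2*k), |k - r| ^ (-(1/2) : ℝ) ≤ 4 * Real.sqrt k := by
  have hk0 : (0:ℝ) < k := lt_of_lt_of_le one_pos hk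
  have hhalf : (-1:ℝ) < -(1/2) := by norm_num
  -- left piece
  have hL0 : IntervalIntegrable (fun x : ℝ => (k - x) ^ (-(1/2):ℝ)) volume (k/2) k := by
    have := (intervalIntegrable_rpow' (a := k/2) (b := 0) hhalf).comp_sub_left k
    rwa [show k - k/2 = k/2 by ring, sub_zero] at this
  have hLeq : Set.EqOn (fun x : ℝ => (k - x) ^ (-(1/2):ℝ)) (fun r : ℝ => |k - r| ^ (-(1/2) : ℝ))
      (Set.Ioc (k/2) k) := by
    intro x hx
    simp only
    rw [abs_of_nonneg (by linarith [hx.2] : (0:ℝ) ≤ k - x)]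
  have hLset : IntegrableOn (fun r : ℝ => |k - r| ^ (-(1/2) : ℝ)) (Set.Ioc (k/2) k) volume :=
    (((intervalIntegrable_iff_integrableOn_Ioc_of_le (by linarith)).1 hL0).congr_fun hLeq
      measurableSet_Ioc)
  -- right piece
  have hR0 : IntervalIntegrable (fun x : ℝ => (x - k) ^ (-(1/2):ℝ)) volume k (2*k) := by
    have := (intervalIntegrable_rpow' (a := 0) (b := k) hhalf).comp_sub_right k
    rwa [zero_add, show k + k = 2*k by ring] at this
  have hReq : Set.EqOn (fun x : ℝ => (x - k) ^ (-(1/2):ℝ)) (fun r : ℝ => |k - r| ^ (-(1/2) : ℝ))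
      (Set.Ioc k (2*k)) := by
    intro x hx
    simp only
    rw [abs_sub_comm, abs_of_nonneg (by linarith [hx.1] : (0:ℝ) ≤ x - k)]
  have hRset : IntegrableOn (fun r : ℝ => |k - r| ^ (-(1/2) : ℝ)) (Set.Ioc k (2*k)) volume :=
    (((intervalIntegrable_iff_integrableOn_Ioc_of_le (by linarith)).1 hR0).congr_fun hReq
      measurableSet_Ioc)
  have hunion : Set.Ioc (k/2) k ∪ Set.Ioc k (2*k) = Set.Ioc (k/2) (2*k) :=
    Set.Ioc_union_Ioc_eq_Ioc (by linarith) (by linarith)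
  have hint : IntegrableOn (fun r : ℝ => |k - r| ^ (-(1/2) : ℝ)) (Set.Ioc (k/2) (2*k)) volume := by
    rw [← hunion]; exact hLset.union hRset
  refine ⟨hint, ?_⟩
  rw [← hunion, setIntegral_union (Set.Ioc_disjoint_Ioc_of_le le_rfl) measurableSet_Ioc hLset hRset]
  -- compute left integral
  have hLval : ∫ r in Set.Ioc (k/2) k, |k - r| ^ (-(1/2) : ℝ) ≤ 2 * Real.sqrt k := by
    rw [← setIntegral_congr_fun measurableSet_Ioc hLeq]
    rw [← intervalIntegral.integral_of_le (by linarith : k/2 ≤ k)]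
    rw [intervalIntegral.integral_comp_sub_left (fun u : ℝ => u ^ (-(1/2):ℝ)) k]
    rw [show k - k = (0:ℝ) by ring]
    rw [integral_rpow (Or.inl hhalf)]
    rw [Real.zero_rpow (by norm_num)]
    have : (k - k/2) ^ ((-(1/2):ℝ) + 1) = Real.sqrt (k/2) := by
      rw [show (-(1/2):ℝ) + 1 = 1/2 by norm_num, show k - k/2 = k/2 by ring,
        Real.sqrt_eq_rpow]
    rw [this]
    have h2 : Real.sqrt (k/2) ≤ Real.sqrt k := Real.sqrt_le_sqrt (by linarith)
    rw [show (-(1/2):ℝ) + 1 = 1/2 by norm_num]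
    rw [div_le_iff₀ (by norm_num : (0:ℝ) < 1/2)] at *
    linarith
  have hRval : ∫ r in Set.Ioc k (2*k), |k - r| ^ (-(1/2) : ℝ) ≤ 2 * Real.sqrt k := by
    rw [← setIntegral_congr_fun measurableSet_Ioc hReq]
    rw [← intervalIntegral.integral_of_le (by linarith : k ≤ 2*k)]
    rw [intervalIntegral.integral_comp_sub_right (fun u : ℝ => u ^ (-(1/2):ℝ)) k]
    rw [show k - k = (0:ℝ) by ring, show 2*k - k = k by ring]
    rw [integral_rpow (Or.inl hhalf)]
    rw [Real.zero_rpow (by norm_num)]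
    rw [show (-(1/2):ℝ) + 1 = 1/2 by norm_num, ← Real.sqrt_eq_rpow]
    rw [div_le_iff₀ (by norm_num : (0:ℝ) < 1/2)]
    linarith
  linarith

lemma ptwise (k : ℝ) (hk : 1 ≤ k) (r : ℝ) (hr : 0 < r) :
    ((1 + r) ^ 2)⁻¹ * (Real.sqrt |k ^ 2 - r ^ 2|)⁻¹ ≤
      2 / k * ((1 + r) ^ 2)⁻¹ +
      (Set.Ioc (k/2) (2*k)).indicator
        (fun s : ℝ => 4 / (k ^ 2 * Real.sqrt k) * |k - s| ^ (-(1/2) : ℝ)) r := by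
  have hk0 : (0:ℝ) < k := lt_of_lt_of_le one_pos hk
  by_cases hmem : r ∈ Set.Ioc (k/2) (2*k)
  · rw [Set.indicator_of_mem hmem]
    have hfirst : (0:ℝ) ≤ 2 / k * ((1 + r) ^ 2)⁻¹ := by positivity
    have hmain : ((1 + r) ^ 2)⁻¹ * (Real.sqrt |k ^ 2 - r ^ 2|)⁻¹ ≤
        4 / (k ^ 2 * Real.sqrt k) * |k - r| ^ (-(1/2) : ℝ) := by
      have habs : |k ^ 2 - r ^ 2| = |k - r| * (k + r) := by
        rw [show k ^ 2 - r ^ 2 = (k - r) * (k + r) by ring, abs_mul,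
          abs_of_pos (by linarith : (0:ℝ) < k + r)]
      rw [habs, Real.sqrt_mul (abs_nonneg _), mul_inv]
      have hsk : (0:ℝ) < Real.sqrt k := Real.sqrt_pos.2 hk0
      have hA : ((1 + r) ^ 2)⁻¹ ≤ 4 / k ^ 2 := by
        rw [show (4:ℝ) / k ^ 2 = ((k/2)^2)⁻¹ by field_simp; ring]
        apply inv_anti₀ (by positivity)
        nlinarith [hmem.1]
      have hB : (Real.sqrt (k + r))⁻¹ ≤ (Real.sqrt k)⁻¹ :=
        inv_anti₀ hsk (Real.sqrt_le_sqrt (by linarith))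
      have hC : (Real.sqrt |k - r|)⁻¹ = |k - r| ^ (-(1/2) : ℝ) := by
        rw [Real.sqrt_eq_rpow, ← Real.rpow_neg (abs_nonneg _)]
      calc ((1 + r) ^ 2)⁻¹ * ((Real.sqrt |k - r|)⁻¹ * (Real.sqrt (k + r))⁻¹)
          = (((1 + r) ^ 2)⁻¹ * (Real.sqrt (k + r))⁻¹) * (Real.sqrt |k - r|)⁻¹ := by ring
        _ ≤ ((4 / k ^ 2) * (Real.sqrt k)⁻¹) * (Real.sqrt |k - r|)⁻¹ := by
            apply mul_le_mul_of_nonneg_right _ (by positivity)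
            exact mul_le_mul hA hB (by positivity) (by positivity)
        _ = 4 / (k ^ 2 * Real.sqrt k) * |k - r| ^ (-(1/2) : ℝ) := by
            rw [← hC]; field_simp
    linarith
  · rw [Set.indicator_of_notMem hmem, add_zero]
    have hcase : r ≤ k/2 ∨ 2*k < r := by
      rw [Set.mem_Ioc, not_and_or, not_lt, not_le] at hmem
      tauto
    have hKK : k ^ 2 / 4 ≤ |k ^ 2 - r ^ 2| := by
      rcases hcase with h | h
      · have := le_abs_self (k ^ 2 - r ^ 2); nlinarith
      · have := neg_abs_le (k ^ 2 - r ^ 2); nlinarith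
    have hsq : Real.sqrt (k ^ 2 / 4) = k / 2 := by
      rw [show k ^ 2 / 4 = (k/2)^2 by ring, Real.sqrt_sq (by positivity)]
    have hD : (Real.sqrt |k ^ 2 - r ^ 2|)⁻¹ ≤ 2 / k := by
      rw [show (2:ℝ) / k = (k/2)⁻¹ by field_simp, ← hsq]
      exact inv_anti₀ (by rw [hsq]; positivity) (Real.sqrt_le_sqrt hKK)
    calc ((1 + r) ^ 2)⁻¹ * (Real.sqrt |k ^ 2 - r ^ 2|)⁻¹
        ≤ ((1 + r) ^ 2)⁻¹ * (2 / k) := mul_le_mul_of_nonneg_left hD (by positivity)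
      _ = 2 / k * ((1 + r) ^ 2)⁻¹ := by ring


/-- There exists `C > 0` such that for every `k ≥ 1` the function
`r ↦ (1+r)^{−2}|k² − r²|^{−1/2}` is integrable on `(0, ∞)` and
`∫₀^∞ (1+r)^{−2}|k² − r²|^{−1/2} dr ≤ C/k`. -/
theorem integral_estimate_exists_const :
    ∃ C : ℝ, 0 < C ∧ ∀ k : ℝ, 1 ≤ k →
      IntegrableOn (fun r : ℝ => ((1 + r) ^ 2)⁻¹ * (Real.sqrt |k ^ 2 - r ^ 2|)⁻¹)
        (Set.Ioi (0 : ℝ)) volume ∧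
      ∫ r in Set.Ioi (0 : ℝ), ((1 + r) ^ 2)⁻¹ * (Real.sqrt |k ^ 2 - r ^ 2|)⁻¹
        ≤ C / k := by
  refine ⟨18, by norm_num, fun k hk => ?_⟩
  have hk0 : (0:ℝ) < k := lt_of_lt_of_le one_pos hk
  have hsk : (0:ℝ) < Real.sqrt k := Real.sqrt_pos.2 hk0
  set f : ℝ → ℝ := fun r => ((1 + r) ^ 2)⁻¹ * (Real.sqrt |k ^ 2 - r ^ 2|)⁻¹ with hf
  set g : ℝ → ℝ := fun r => 2 / k * ((1 + r) ^ 2)⁻¹ +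
      (Set.Ioc (k/2) (2*k)).indicator
        (fun s : ℝ => 4 / (k ^ 2 * Real.sqrt k) * |k - s| ^ (-(1/2) : ℝ)) r with hg
  -- integrability of g on Ioi 0
  have hbase := base_int
  have hmid := mid_int k hk
  have hg1 : IntegrableOn (fun r : ℝ => 2 / k * ((1 + r) ^ 2)⁻¹) (Set.Ioi (0:ℝ)) volume :=
    hbase.1.const_mul _
  have hind : Integrable ((Set.Ioc (k/2) (2*k)).indicator
      (fun s : ℝ => 4 / (k ^ 2 * Real.sqrt k) * |k - s| ^ (-(1/2) : ℝ))) volume :=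
    IntegrableOn.integrable_indicator (hmid.1.const_mul _) measurableSet_Ioc
  have hg2 : IntegrableOn ((Set.Ioc (k/2) (2*k)).indicator
      (fun s : ℝ => 4 / (k ^ 2 * Real.sqrt k) * |k - s| ^ (-(1/2) : ℝ))) (Set.Ioi (0:ℝ)) volume :=
    hind.integrableOn
  have hgint : IntegrableOn g (Set.Ioi (0:ℝ)) volume := hg1.add hg2
  -- f is measurable and nonneg, f ≤ g on Ioi 0
  have hfmeas : AEStronglyMeasurable f (volume.restrict (Set.Ioi (0:ℝ))) := by
    apply Measurable.aestronglyMeasurable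
    fun_prop
  have hfg : ∀ r ∈ Set.Ioi (0:ℝ), f r ≤ g r := fun r hr => ptwise k hk r hr
  have hf0 : ∀ r, 0 ≤ f r := by intro r; positivity
  have hbound : ∀ᵐ r ∂volume.restrict (Set.Ioi (0:ℝ)), ‖f r‖ ≤ g r := by
    rw [ae_restrict_iff' measurableSet_Ioi]
    exact Filter.Eventually.of_forall fun r hr => by
      rw [Real.norm_eq_abs, abs_of_nonneg (hf0 r)]; exact hfg r hr
  have hfint : IntegrableOn f (Set.Ioi (0:ℝ)) volume := hgint.mono' hfmeas hbound
  refine ⟨hfint, ?_⟩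
  have h1 : ∫ r in Set.Ioi (0:ℝ), f r ≤ ∫ r in Set.Ioi (0:ℝ), g r := by
    apply integral_mono_ae hfint hgint
    rw [Filter.EventuallyLE, ae_restrict_iff' measurableSet_Ioi]
    exact Filter.Eventually.of_forall fun r hr => hfg r hr
  have h2 : ∫ r in Set.Ioi (0:ℝ), g r =
      (∫ r in Set.Ioi (0:ℝ), 2 / k * ((1 + r) ^ 2)⁻¹) +
      ∫ r in Set.Ioi (0:ℝ), (Set.Ioc (k/2) (2*k)).indicator
        (fun s : ℝ => 4 / (k ^ 2 * Real.sqrt k) * |k - s| ^ (-(1/2) : ℝ)) r :=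
    integral_add hg1 hg2
  have h3 : (∫ r in Set.Ioi (0:ℝ), 2 / k * ((1 + r) ^ 2)⁻¹) = 2 / k := by
    rw [MeasureTheory.integral_const_mul, hbase.2, mul_one]
  have h4 : (∫ r in Set.Ioi (0:ℝ), (Set.Ioc (k/2) (2*k)).indicator
      (fun s : ℝ => 4 / (k ^ 2 * Real.sqrt k) * |k - s| ^ (-(1/2) : ℝ)) r) ≤ 16 / k ^ 2 := by
    rw [setIntegral_indicator measurableSet_Ioc]
    have hss : Set.Ioi (0:ℝ) ∩ Set.Ioc (k/2) (2*k) = Set.Ioc (k/2) (2*k) := by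
      apply Set.inter_eq_self_of_subset_right
      intro x hx
      have : (0:ℝ) < k/2 := by linarith
      exact lt_trans this hx.1
    rw [hss, MeasureTheory.integral_const_mul]
    have hcpos : (0:ℝ) ≤ 4 / (k ^ 2 * Real.sqrt k) := by positivity
    calc 4 / (k ^ 2 * Real.sqrt k) * ∫ r in Set.Ioc (k/2) (2*k), |k - r| ^ (-(1/2) : ℝ)
        ≤ 4 / (k ^ 2 * Real.sqrt k) * (4 * Real.sqrt k) :=
          mul_le_mul_of_nonneg_left hmid.2 hcpos
      _ = 16 / k ^ 2 := by field_simp; ring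
  have h5 : 16 / k ^ 2 ≤ 16 / k := by
    apply div_le_div_of_nonneg_left (by norm_num) hk0
    nlinarith
  have : (18:ℝ) / k = 2 / k + 16 / k := by ring
  rw [this]
  calc ∫ r in Set.Ioi (0:ℝ), f r ≤ _ := h1
    _ = _ := h2
    _ ≤ 2 / k + 16 / k := by rw [h3]; linarith
end
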